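/- For any boolean function f : {0,1}^n → {0,1}, bs(f) ≤ 5·(deg̃_{1/3}(f))², where deg̃_{1/3}(f) is the least degree of a real multilinear polynomial p with |p(x) − f(x)| ≤ 1/3 for all x ∈ {0,1}^n. -/

import Mathlib

open Finset
open scoped Classical

namespace BF

noncomputable section

/-- flip the bits of `x` belonging to `B`. -/
def flipS {n : ℕ} (x : Fin n → Bool) (B : Finset (Fin n)) : Fin n → Bool :=
  fun i => if i ∈ B then !(x i) else x i

/-- flip the `i`-th bit of `x`. -/
def flip1 {n : ℕ} (x : Fin n → Bool) (i : Fin n) : Fin n → Bool :=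
  fun j => if j = i then !(x j) else x j

/-- real value of a boolean. -/
def bval (b : Bool) : ℝ := if b then 1 else 0

/-- coefficient of the monomial `∏_{i ∈ S} x_i` in the unique multilinear
real polynomial expansion of `f` (Möbius inversion over the subcube lattice). -/
def coeffS {n : ℕ} (f : (Fin n → Bool) → ℝ) (S : Finset (Fin n)) : ℝ :=
  ∑ T ∈ S.powerset, (-1 : ℝ) ^ (S.card - T.card) * f (fun i => decide (i ∈ T))

/-- degree of the multilinear expansion of a real-valued function on the cube. -/
def degF {n : ℕ} (f : (Fin n → Bool) → ℝ) : ℕ :=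
  (Finset.univ.filter fun S : Finset (Fin n) => coeffS f S ≠ 0).sup Finset.card

/-- degree of a boolean function. -/
def degB {n : ℕ} (f : (Fin n → Bool) → Bool) : ℕ := degF (fun x => bval (f x))

/-- block sensitivity of `f` at `x`. -/
def bsAt {n : ℕ} (f : (Fin n → Bool) → Bool) (x : Fin n → Bool) : ℕ :=
  (Finset.univ.filter fun 𝓑 : Finset (Finset (Fin n)) =>
      (∀ B ∈ 𝓑, f (flipS x B) ≠ f x) ∧
      ∀ A ∈ 𝓑, ∀ B ∈ 𝓑, A ≠ B → Disjoint A B).sup Finset.card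

/-- block sensitivity of `f`. -/
def bs {n : ℕ} (f : (Fin n → Bool) → Bool) : ℕ := Finset.univ.sup (bsAt f)

/-- sensitivity of `f` at `x`. -/
def sx {n : ℕ} (f : (Fin n → Bool) → Bool) (x : Fin n → Bool) : ℕ :=
  (Finset.univ.filter fun i => f (flip1 x i) ≠ f x).card

/-- (maximum) sensitivity of `f`. -/
def sens {n : ℕ} (f : (Fin n → Bool) → Bool) : ℕ := Finset.univ.sup (sx f)

/-- coordinate `i` is relevant for `f`. -/
def Rel {n : ℕ} (i : Fin n) (f : (Fin n → Bool) → Bool) : Prop :=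
  ∃ x, f (flip1 x i) ≠ f x

/-- the set of relevant coordinates of `f`. -/
def relSet {n : ℕ} (f : (Fin n → Bool) → Bool) : Finset (Fin n) :=
  Finset.univ.filter fun i => Rel i f

/-- the number of relevant variables `n(f)`. -/
def nrel {n : ℕ} (f : (Fin n → Bool) → Bool) : ℕ := (relSet f).card

/-- influence of coordinate `i` on `f` (uniform distribution). -/
def infl {n : ℕ} (f : (Fin n → Bool) → Bool) (i : Fin n) : ℝ :=
  ((Finset.univ.filter fun x : Fin n → Bool => f x ≠ f (flip1 x i)).card : ℝ) / 2 ^ n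

/-- total influence `I[f]`. -/
def totalInf {n : ℕ} (f : (Fin n → Bool) → Bool) : ℝ := ∑ i, infl f i

/-- restriction of `f` fixing the coordinates in `H` according to `α`
(viewed as a function on the full cube not depending on the coordinates in `H`). -/
def restrict {n : ℕ} (f : (Fin n → Bool) → Bool) (H : Finset (Fin n))
    (α : Fin n → Bool) : (Fin n → Bool) → Bool :=
  fun x => f (fun i => if i ∈ H then α i else x i)

/-- certificate complexity of `f` at `x`. -/
def certAt {n : ℕ} (f : (Fin n → Bool) → Bool) (x : Fin n → Bool) : ℕ :=
  sInf {k | ∃ S : Finset (Fin n), S.card = k ∧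
    ∀ y, (∀ i ∈ S, y i = x i) → f y = f x}

/-- certificate complexity `C(f)`. -/
def certC {n : ℕ} (f : (Fin n → Bool) → Bool) : ℕ := Finset.univ.sup (certAt f)

/-- `f` is in standard form: `f(0) = 0` and `f(e_i) = 1` for every basis vector. -/
def stdForm {b : ℕ} (f : (Fin b → Bool) → Bool) : Prop :=
  f (fun _ => false) = false ∧ ∀ i : Fin b, f (fun j => decide (j = i)) = true

end

end BF

open BF

section Cheb
open Polynomial Polynomial.Chebyshev

lemma U_eval_one' (m : ℕ) : (U ℝ (m:ℤ)).eval 1 = m + 1 := by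
  induction m using Nat.strong_induction_on with
  | _ m ih =>
    match m with
    | 0 => simp [U_zero]
    | 1 => norm_num [U_one]
    | (k+2) =>
      have h := U_add_two ℝ (k:ℤ)
      have h1 := ih k (by omega)
      have h2 := ih (k+1) (by omega)
      have e : ((k:ℤ)+2) = ((k+2:ℕ):ℤ) := by push_cast; ring
      have e1 : ((k:ℤ)+1) = ((k+1:ℕ):ℤ) := by push_cast; ring
      rw [e, e1] at h
      rw [h]
      simp only [eval_sub, eval_mul, eval_ofNat, eval_X, h1, h2]
      push_cast
      ring

lemma natDegree_T_le (m : ℕ) : (T ℝ (m:ℤ)).natDegree ≤ m := by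
  induction m using Nat.strong_induction_on with
  | _ m ih =>
    match m with
    | 0 => simp [T_zero]
    | 1 => simp [T_one]
    | (k+2) =>
      have h := T_add_two ℝ (k:ℤ)
      have e : ((k:ℤ)+2) = ((k+2:ℕ):ℤ) := by push_cast; ring
      have e1 : ((k:ℤ)+1) = ((k+1:ℕ):ℤ) := by push_cast; ring
      rw [e, e1] at h
      rw [h]
      refine le_trans (natDegree_sub_le _ _) ?_
      have h1 := ih k (by omega)
      have h2 := ih (k+1) (by omega)
      have : (2 * X * T ℝ ((k+1:ℕ):ℤ)).natDegree ≤ k + 2 := by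
        refine le_trans (natDegree_mul_le) ?_
        have : (2 * X : ℝ[X]).natDegree ≤ 1 := by
          refine le_trans (natDegree_mul_le) ?_
          simp
        omega
      omega

lemma T_eval_one' (m : ℕ) : (T ℝ (m:ℤ)).eval 1 = 1 := by
  have := T_real_cos (θ := 0) (n := (m:ℤ))
  simpa using this

lemma T_deriv_eval_one (m : ℕ) (hm : 1 ≤ m) :
    (derivative (T ℝ (m:ℤ))).eval 1 = m^2 := by
  have h := T_derivative_eq_U (R := ℝ) (m:ℤ)
  rw [h]
  obtain ⟨e, rfl⟩ : ∃ e, m = e + 1 := ⟨m - 1, by omega⟩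
  have e1 : ((e+1:ℕ):ℤ) - 1 = ((e:ℕ):ℤ) := by push_cast; ring
  rw [e1]
  rw [eval_mul, U_eval_one']
  push_cast
  simp
  ring

end Cheb
section Markov
open Polynomial Polynomial.Chebyshev Finset Real



lemma markov_endpoint (d : ℕ) (hd : 1 ≤ d) (M : ℝ)
    (r : ℝ[X]) (hdeg : r.natDegree ≤ d)
    (hM : ∀ t : ℝ, t ∈ Set.Icc (-1:ℝ) 1 → |r.eval t| ≤ M) :
    |(derivative r).eval 1| ≤ d^2 * M := by
  have hdpos : (0:ℝ) < d := by exact_mod_cast hd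
  set v : Fin (d+1) → ℝ := fun k => Real.cos (k * π / d) with hv
  have hθmem : ∀ k : Fin (d+1), (k:ℝ) * π / (d:ℝ) ∈ Set.Icc 0 π := by
    intro k
    constructor
    · positivity
    · rw [div_le_iff₀ hdpos]
      have : (k:ℝ) ≤ d := by exact_mod_cast Fin.is_le k
      nlinarith [Real.pi_pos]
  have hθlt : ∀ j k : Fin (d+1), j < k → (j:ℝ) * π / d < (k:ℝ) * π / d := by
    intro j k hjk
    have : (j:ℝ) < k := by exact_mod_cast hjk
    have := Real.pi_pos
    gcongr
  have hanti : ∀ j k : Fin (d+1), j < k → v k < v j := by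
    intro j k hjk
    exact Real.strictAntiOn_cos (hθmem j) (hθmem k) (hθlt j k hjk)
  have hinj : Set.InjOn v (univ : Finset (Fin (d+1))) := by
    intro a _ b _ hab
    rcases lt_trichotomy a b with h | h | h
    · exact absurd hab (hanti a b h).ne'
    · exact h
    · exact absurd hab (hanti b a h).ne
  have hvmem : ∀ k, v k ∈ Set.Icc (-1:ℝ) 1 := fun k => ⟨Real.neg_one_le_cos _, Real.cos_le_one _⟩
  set E : Fin (d+1) → ℝ := fun k => (derivative (Lagrange.basis univ v k)).eval 1 with hE
  have key : ∀ p : ℝ[X], p.natDegree ≤ d →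
      (derivative p).eval 1 = ∑ k, p.eval (v k) * E k := by
    intro p hp
    have hlt : p.degree < ((univ : Finset (Fin (d+1))).card : WithBot ℕ) := by
      rw [card_univ, Fintype.card_fin]
      refine lt_of_le_of_lt (degree_le_natDegree) ?_
      exact_mod_cast Nat.lt_succ_of_le hp
    have hrp := Lagrange.eq_interpolate (v := v) (f := p) hinj hlt
    conv_lhs => rw [hrp]
    rw [Lagrange.interpolate_apply, derivative_sum, eval_finset_sum]
    refine Finset.sum_congr rfl fun k _ => ?_
    rw [derivative_C_mul, eval_mul, eval_C]
  -- basis decomposition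
  have hbasis : ∀ k : Fin (d+1), Lagrange.basis univ v k
      = C (∏ j ∈ univ.erase k, (v k - v j)⁻¹) * Lagrange.nodal (univ.erase k) v := by
    intro k
    rw [Lagrange.basis, Lagrange.nodal, map_prod, ← Finset.prod_mul_distrib]
    refine Finset.prod_congr rfl fun j _ => rfl
  have hN : ∀ k : Fin (d+1), 0 ≤ (derivative (Lagrange.nodal (univ.erase k) v)).eval 1 := by
    intro k
    rw [Lagrange.derivative_nodal, eval_finset_sum]
    refine Finset.sum_nonneg fun m _ => ?_
    rw [Lagrange.eval_nodal]
    refine Finset.prod_nonneg fun j _ => ?_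
    have := (hvmem j).2
    linarith
  have hcard : ∀ k : Fin (d+1), ((univ.erase k).filter (fun j => j < k)).card = (k:ℕ) := by
    intro k
    have : (univ.erase k).filter (fun j => j < k) = Finset.Iio k := by
      ext j
      simp only [Finset.mem_filter, Finset.mem_erase, Finset.mem_univ, Finset.mem_Iio, true_and,
        and_true]
      constructor
      · exact fun h => h.2
      · exact fun h => ⟨ne_of_lt h, h⟩
    rw [this, Fin.card_Iio]
  have hP : ∀ k : Fin (d+1), 0 < (-1:ℝ)^(k:ℕ) * ∏ j ∈ univ.erase k, (v k - v j) := by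
    intro k
    rw [← Finset.prod_filter_mul_prod_filter_not (univ.erase k) (fun j => j < k)]
    have h1 : ∏ j ∈ (univ.erase k).filter (fun j => j < k), (v k - v j)
        = (-1:ℝ)^(k:ℕ) * ∏ j ∈ (univ.erase k).filter (fun j => j < k), (v j - v k) := by
      rw [← hcard k, ← Finset.prod_const (-1:ℝ), ← Finset.prod_mul_distrib]
      exact Finset.prod_congr rfl fun j _ => by ring
    rw [h1]
    have h2 : (0:ℝ) < ∏ j ∈ (univ.erase k).filter (fun j => j < k), (v j - v k) := by
      refine Finset.prod_pos fun j hj => ?_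
      rw [Finset.mem_filter] at hj
      have := hanti j k hj.2
      linarith
    have h3 : (0:ℝ) < ∏ j ∈ (univ.erase k).filter (fun j => ¬ j < k), (v k - v j) := by
      refine Finset.prod_pos fun j hj => ?_
      rw [Finset.mem_filter, Finset.mem_erase] at hj
      have hkj : k < j := by
        rcases lt_trichotomy j k with h | h | h
        · exact absurd h hj.2
        · exact absurd h hj.1.1
        · exact h
      have := hanti k j hkj
      linarith
    have h4 : ((-1:ℝ)^(k:ℕ))^2 = 1 := by
      rw [← pow_mul, mul_comm, pow_mul]
      norm_num
    calc (0:ℝ) < ((-1:ℝ)^(k:ℕ))^2 * ((∏ j ∈ (univ.erase k).filter (fun j => j < k), (v j - v k))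
          * ∏ j ∈ (univ.erase k).filter (fun j => ¬ j < k), (v k - v j)) := by
          rw [h4]; rw [one_mul]; exact mul_pos h2 h3
      _ = (-1:ℝ)^(k:ℕ) * ((-1:ℝ)^(k:ℕ) * (∏ j ∈ (univ.erase k).filter (fun j => j < k), (v j - v k))
          * ∏ j ∈ (univ.erase k).filter (fun j => ¬ j < k), (v k - v j)) := by ring
  have hsign : ∀ k : Fin (d+1), 0 ≤ (-1:ℝ)^(k:ℕ) * E k := by
    intro k
    have : E k = (∏ j ∈ univ.erase k, (v k - v j))⁻¹
        * (derivative (Lagrange.nodal (univ.erase k) v)).eval 1 := by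
      rw [hE]
      simp only
      rw [hbasis k, derivative_C_mul, eval_mul, eval_C, Finset.prod_inv_distrib]
    rw [this]
    have : (-1:ℝ)^(k:ℕ) * ((∏ j ∈ univ.erase k, (v k - v j))⁻¹
        * (derivative (Lagrange.nodal (univ.erase k) v)).eval 1)
        = ((-1:ℝ)^(k:ℕ) * ∏ j ∈ univ.erase k, (v k - v j))⁻¹
        * (derivative (Lagrange.nodal (univ.erase k) v)).eval 1 := by
      rw [mul_inv]
      have h4 : ((-1:ℝ)^(k:ℕ))⁻¹ = (-1:ℝ)^(k:ℕ) := by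
        rw [← inv_pow]; norm_num
      rw [h4]; ring
    rw [this]
    exact mul_nonneg (le_of_lt (inv_pos.mpr (hP k))) (hN k)
  have htotal : ∑ k : Fin (d+1), (-1:ℝ)^(k:ℕ) * E k = (d:ℝ)^2 := by
    have h1 := key (T ℝ (d:ℤ)) (natDegree_T_le d)
    have h2 : ∀ k : Fin (d+1), (T ℝ (d:ℤ)).eval (v k) = (-1:ℝ)^(k:ℕ) := by
      intro k
      rw [hv]
      simp only
      rw [T_real_cos]
      have : (((d:ℤ)):ℝ) * ((k:ℝ) * π / d) = ((k:ℕ):ℝ) * π := by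
        push_cast
        field_simp
      rw [this]
      have := Real.cos_nat_mul_pi_sub 0 (k:ℕ)
      simpa using this
    rw [T_deriv_eval_one d hd] at h1
    rw [h1]
    refine Finset.sum_congr rfl fun k _ => ?_
    rw [h2 k]
  have hM0 : 0 ≤ M := le_trans (abs_nonneg _) (hM 1 ⟨by norm_num, le_refl 1⟩)
  rw [key r hdeg]
  calc |∑ k : Fin (d+1), r.eval (v k) * E k| ≤ ∑ k : Fin (d+1), |r.eval (v k) * E k| :=
        Finset.abs_sum_le_sum_abs _ _
    _ ≤ ∑ k : Fin (d+1), M * ((-1:ℝ)^(k:ℕ) * E k) := by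
        refine Finset.sum_le_sum fun k _ => ?_
        rw [abs_mul]
        have hEk : |E k| = (-1:ℝ)^(k:ℕ) * E k := by
          have : |E k| = |(-1:ℝ)^(k:ℕ) * E k| := by
            rw [abs_mul, abs_pow, abs_neg, abs_one, one_pow, one_mul]
          rw [this, abs_of_nonneg (hsign k)]
        rw [hEk]
        exact mul_le_mul_of_nonneg_right (hM (v k) (hvmem k)) (hsign k)
    _ = M * ∑ k : Fin (d+1), (-1:ℝ)^(k:ℕ) * E k := by rw [Finset.mul_sum]
    _ = M * (d:ℝ)^2 := by rw [htotal]
    _ = (d:ℝ)^2 * M := by ring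

end Markov
section Aux
open Polynomial Finset

variable {n : ℕ}

noncomputable def pval (c : Finset (Fin n) → ℝ) (y : Fin n → Bool) : ℝ :=
  ∑ S : Finset (Fin n), c S * ∏ i ∈ S, bval (y i)

lemma bs_witness (f : (Fin n → Bool) → Bool) :
    ∃ (x : Fin n → Bool) (𝓑 : Finset (Finset (Fin n))),
      𝓑.card = bs f ∧ (∀ B ∈ 𝓑, f (flipS x B) ≠ f x) ∧
      (∀ A ∈ 𝓑, ∀ B ∈ 𝓑, A ≠ B → Disjoint A B) := by
  classical
  obtain ⟨x, -, hx⟩ := Finset.exists_mem_eq_sup (univ : Finset (Fin n → Bool))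
    univ_nonempty (bsAt f)
  have hne : (Finset.univ.filter fun 𝓑 : Finset (Finset (Fin n)) =>
      (∀ B ∈ 𝓑, f (flipS x B) ≠ f x) ∧
      ∀ A ∈ 𝓑, ∀ B ∈ 𝓑, A ≠ B → Disjoint A B).Nonempty := by
    refine ⟨∅, ?_⟩
    simp
  obtain ⟨𝓑, h𝓑mem, h𝓑⟩ := Finset.exists_mem_eq_sup _ hne Finset.card
  rw [Finset.mem_filter] at h𝓑mem
  refine ⟨x, 𝓑, ?_, h𝓑mem.2.1, h𝓑mem.2.2⟩
  rw [show bs f = bsAt f x from hx]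
  exact h𝓑.symm

lemma bval_false' : bval false = 0 := rfl
lemma bval_true' : bval true = 1 := rfl

lemma bval_mem_01 (y : Bool) : bval y = 0 ∨ bval y = 1 := by
  cases y <;> simp [bval]

lemma pval_half (c : Finset (Fin n) → ℝ) (f : (Fin n → Bool) → Bool)
    (happrox : ∀ x : Fin n → Bool,
      |(∑ S : Finset (Fin n), c S * ∏ i ∈ S, bval (x i)) - bval (f x)| ≤ 1 / 3)
    (y : Fin n → Bool) : |pval c y - 1/2| ≤ 5/6 := by
  have h1 := happrox y
  have h2 : |bval (f y) - 1/2| = 1/2 := by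
    rcases bval_mem_01 (f y) with h | h <;> rw [h] <;> norm_num
  calc |pval c y - 1/2| = |(pval c y - bval (f y)) + (bval (f y) - 1/2)| := by ring_nf
    _ ≤ |pval c y - bval (f y)| + |bval (f y) - 1/2| := abs_add_le _ _
    _ ≤ 1/3 + 1/2 := by rw [h2]; exact add_le_add h1 le_rfl
    _ = 5/6 := by norm_num

lemma eval0_deriv_term0 (a : ℝ) (m : ℕ) :
    (derivative (C a * (X^(0:ℕ) * (1 - X)^m))).eval 0 = -(a * m) := by
  rw [derivative_C_mul, pow_zero, one_mul, derivative_pow]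
  simp [derivative_sub]

lemma eval0_deriv_term1 (a : ℝ) (m : ℕ) :
    (derivative (C a * (X^(1:ℕ) * (1 - X)^m))).eval 0 = a := by
  rw [derivative_C_mul, pow_one, derivative_mul, derivative_X, derivative_pow]
  simp [derivative_sub]

lemma eval0_deriv_term2 (a : ℝ) (k m : ℕ) (hk : 2 ≤ k) :
    (derivative (C a * (X^k * (1 - X)^m))).eval 0 = 0 := by
  rw [derivative_C_mul, derivative_mul, derivative_X_pow, derivative_pow]
  have h1 : (0:ℝ)^(k-1) = 0 := zero_pow (by omega)
  have h2 : (0:ℝ)^k = 0 := zero_pow (by omega)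
  simp [h1, h2]

end Aux

section Core
open Polynomial Finset

variable {n : ℕ}

noncomputable def qpoly (c : Finset (Fin n) → ℝ) (x : Fin n → Bool)
    (𝓑 : Finset (Finset (Fin n))) : ℝ[X] :=
  ∑ W ∈ 𝓑.powerset, C (pval c (flipS x (W.biUnion id))) *
    (X ^ W.card * (1 - X) ^ (𝓑.card - W.card))

lemma flip_prod_eq (c : Finset (Fin n) → ℝ) (x : Fin n → Bool)
    (𝓑 : Finset (Finset (Fin n)))
    (hdisj : ∀ A ∈ 𝓑, ∀ B ∈ 𝓑, A ≠ B → Disjoint A B)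
    {W : Finset (Finset (Fin n))} (hW : W ⊆ 𝓑) (S : Finset (Fin n)) :
    ∏ i ∈ S, bval (flipS x (W.biUnion id) i) =
      (∏ i ∈ S \ 𝓑.biUnion id, bval (x i)) *
      ((∏ B ∈ 𝓑 \ W, ∏ i ∈ S ∩ B, bval (x i)) *
       (∏ B ∈ W, ∏ i ∈ S ∩ B, bval (!(x i)))) := by
  classical
  set g : Fin n → ℝ := fun i => bval (flipS x (W.biUnion id) i) with hg
  have hWU : W.biUnion id ⊆ 𝓑.biUnion id :=
    Finset.biUnion_subset_biUnion_of_subset_left id hW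
  have hsplit : (∏ i ∈ S \ (S ∩ 𝓑.biUnion id), g i) * (∏ i ∈ S ∩ 𝓑.biUnion id, g i)
      = ∏ i ∈ S, g i := Finset.prod_sdiff inter_subset_left
  rw [← hsplit, Finset.sdiff_inter_self_left]
  have hinter : S ∩ 𝓑.biUnion id = 𝓑.biUnion (fun B => S ∩ B) := by
    ext i
    simp only [mem_inter, mem_biUnion, id]
    tauto
  have hpd : (↑𝓑 : Set (Finset (Fin n))).PairwiseDisjoint (fun B => S ∩ B) := by
    intro A hA B hB hAB
    exact (hdisj A hA B hB hAB).mono inter_subset_right inter_subset_right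
  rw [hinter, Finset.prod_biUnion hpd]
  have hsplit2 : (∏ B ∈ 𝓑 \ W, ∏ i ∈ S ∩ B, g i) * (∏ B ∈ W, ∏ i ∈ S ∩ B, g i)
      = ∏ B ∈ 𝓑, ∏ i ∈ S ∩ B, g i := Finset.prod_sdiff hW
  rw [← hsplit2]
  congr 1
  · refine Finset.prod_congr rfl fun i hi => ?_
    rw [Finset.mem_sdiff] at hi
    have : i ∉ W.biUnion id := fun h => hi.2 (hWU h)
    rw [hg]; simp only [flipS, if_neg this]
  congr 1
  · refine Finset.prod_congr rfl fun B hB => ?_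
    refine Finset.prod_congr rfl fun i hi => ?_
    rw [Finset.mem_sdiff] at hB
    rw [Finset.mem_inter] at hi
    have : i ∉ W.biUnion id := by
      intro h
      rw [Finset.mem_biUnion] at h
      obtain ⟨B', hB', hiB'⟩ := h
      have hne : B ≠ B' := fun h => hB.2 (h ▸ hB')
      exact (Finset.disjoint_left.mp (hdisj B hB.1 B' (hW hB') hne)) hi.2 hiB'
    rw [hg]; simp only [flipS, if_neg this]
  · refine Finset.prod_congr rfl fun B hB => ?_
    refine Finset.prod_congr rfl fun i hi => ?_
    rw [Finset.mem_inter] at hi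
    have : i ∈ W.biUnion id := Finset.mem_biUnion.mpr ⟨B, hB, hi.2⟩
    rw [hg]; simp only [flipS, if_pos this]

lemma qpoly_eq (c : Finset (Fin n) → ℝ) (x : Fin n → Bool)
    (𝓑 : Finset (Finset (Fin n)))
    (hdisj : ∀ A ∈ 𝓑, ∀ B ∈ 𝓑, A ≠ B → Disjoint A B) :
    qpoly c x 𝓑 = ∑ S : Finset (Fin n), C (c S) *
      (C (∏ i ∈ S \ 𝓑.biUnion id, bval (x i)) *
        ∏ B ∈ 𝓑, (C (∏ i ∈ S ∩ B, bval (!(x i))) * X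
                 + C (∏ i ∈ S ∩ B, bval (x i)) * (1 - X))) := by
  classical
  have key : ∀ S : Finset (Fin n), C (c S) *
      (C (∏ i ∈ S \ 𝓑.biUnion id, bval (x i)) *
        ∏ B ∈ 𝓑, (C (∏ i ∈ S ∩ B, bval (!(x i))) * X
                 + C (∏ i ∈ S ∩ B, bval (x i)) * (1 - X)))
      = ∑ W ∈ 𝓑.powerset, C (c S * ∏ i ∈ S, bval (flipS x (W.biUnion id) i)) *
          (X ^ W.card * (1 - X) ^ (𝓑.card - W.card)) := by
    intro S
    rw [Finset.prod_add, Finset.mul_sum, Finset.mul_sum]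
    refine Finset.sum_congr rfl fun W hW => ?_
    rw [Finset.mem_powerset] at hW
    have h1 : ∏ B ∈ W, (C (∏ i ∈ S ∩ B, bval (!(x i))) * X)
        = C (∏ B ∈ W, ∏ i ∈ S ∩ B, bval (!(x i))) * X ^ W.card := by
      rw [Finset.prod_mul_distrib, Finset.prod_const, map_prod]
    have h2 : ∏ B ∈ 𝓑 \ W, (C (∏ i ∈ S ∩ B, bval (x i)) * (1 - X))
        = C (∏ B ∈ 𝓑 \ W, ∏ i ∈ S ∩ B, bval (x i)) * (1 - X) ^ (𝓑.card - W.card) := by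
      rw [Finset.prod_mul_distrib, Finset.prod_const, map_prod, Finset.card_sdiff_of_subset hW]
    rw [h1, h2, flip_prod_eq c x 𝓑 hdisj hW S]
    rw [C_mul, C_mul, C_mul]
    ring
  have expand : ∀ W ∈ 𝓑.powerset,
      C (pval c (flipS x (W.biUnion id))) * (X ^ W.card * (1 - X) ^ (𝓑.card - W.card))
      = ∑ S : Finset (Fin n), C (c S * ∏ i ∈ S, bval (flipS x (W.biUnion id) i)) *
          (X ^ W.card * (1 - X) ^ (𝓑.card - W.card)) := by
    intro W _
    rw [pval, map_sum, Finset.sum_mul]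
  simp only [qpoly]
  rw [Finset.sum_congr rfl expand, Finset.sum_comm]
  exact Finset.sum_congr rfl fun S _ => (key S).symm

end Core

section Core2
open Polynomial Finset

variable {n : ℕ}

lemma flipS_empty (x : Fin n → Bool) : flipS x ∅ = x := by
  funext i; simp [flipS]

lemma qpoly_natDegree_le (c : Finset (Fin n) → ℝ) (x : Fin n → Bool)
    (𝓑 : Finset (Finset (Fin n)))
    (hdisj : ∀ A ∈ 𝓑, ∀ B ∈ 𝓑, A ≠ B → Disjoint A B) (d : ℕ)
    (hdeg : ∀ S : Finset (Fin n), c S ≠ 0 → S.card ≤ d) :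
    (qpoly c x 𝓑).natDegree ≤ d := by
  classical
  rw [qpoly_eq c x 𝓑 hdisj]
  refine Polynomial.natDegree_sum_le_of_forall_le _ _ fun S _ => ?_
  by_cases hc : c S = 0
  · simp [hc]
  refine le_trans (Polynomial.natDegree_C_mul_le _ _) ?_
  refine le_trans (Polynomial.natDegree_C_mul_le _ _) ?_
  set F := 𝓑.filter (fun B => (S ∩ B).Nonempty) with hF
  have hprod : (∏ B ∈ 𝓑, (C (∏ i ∈ S ∩ B, bval (!(x i))) * X
      + C (∏ i ∈ S ∩ B, bval (x i)) * (1 - X)))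
      = ∏ B ∈ F, (C (∏ i ∈ S ∩ B, bval (!(x i))) * X
      + C (∏ i ∈ S ∩ B, bval (x i)) * (1 - X)) := by
    refine (Finset.prod_subset (Finset.filter_subset _ _) fun B hB hBn => ?_).symm
    have hSB : S ∩ B = ∅ := by
      rw [← Finset.not_nonempty_iff_eq_empty]
      exact fun h => hBn (Finset.mem_filter.mpr ⟨hB, h⟩)
    rw [hSB]
    simp only [Finset.prod_empty, map_one, one_mul]
    ring
  rw [hprod]
  have h1 : (∏ B ∈ F, (C (∏ i ∈ S ∩ B, bval (!(x i))) * X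
      + C (∏ i ∈ S ∩ B, bval (x i)) * (1 - X))).natDegree ≤ F.card := by
    refine le_trans (Polynomial.natDegree_prod_le _ _) ?_
    have : ∀ B ∈ F, (C (∏ i ∈ S ∩ B, bval (!(x i))) * X
        + C (∏ i ∈ S ∩ B, bval (x i)) * (1 - X)).natDegree ≤ 1 := by
      intro B _
      refine le_trans (Polynomial.natDegree_add_le _ _) (max_le ?_ ?_)
      · exact le_trans (Polynomial.natDegree_C_mul_le _ _) Polynomial.natDegree_X_le
      · refine le_trans (Polynomial.natDegree_C_mul_le _ _) ?_
        refine le_trans (Polynomial.natDegree_sub_le _ _) ?_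
        simp
    refine le_trans (Finset.sum_le_sum this) ?_
    rw [Finset.sum_const, smul_eq_mul, mul_one]
  have h2 : F.card ≤ S.card := by
    have h6 : ∀ B ∈ F, 1 ≤ (S ∩ B).card := fun B hB =>
      Finset.card_pos.mpr (Finset.mem_filter.mp hB).2
    have h7 : F.card ≤ ∑ B ∈ F, (S ∩ B).card := by
      calc F.card = ∑ _B ∈ F, 1 := by rw [Finset.sum_const, smul_eq_mul, mul_one]
        _ ≤ _ := Finset.sum_le_sum h6
    have h8 : ∑ B ∈ F, (S ∩ B).card = (F.biUnion (fun B => S ∩ B)).card := by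
      refine (Finset.card_biUnion fun A hA B hB hAB => ?_).symm
      exact (hdisj A (Finset.mem_of_mem_filter _ hA) B (Finset.mem_of_mem_filter _ hB)
        hAB).mono inter_subset_right inter_subset_right
    have h9 : F.biUnion (fun B => S ∩ B) ⊆ S :=
      Finset.biUnion_subset.mpr fun B _ => inter_subset_left
    calc F.card ≤ ∑ B ∈ F, (S ∩ B).card := h7
      _ = (F.biUnion (fun B => S ∩ B)).card := h8
      _ ≤ S.card := Finset.card_le_card h9
  exact le_trans h1 (le_trans h2 (hdeg S hc))

lemma qpoly_eval_bound (c : Finset (Fin n) → ℝ) (f : (Fin n → Bool) → Bool)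
    (x : Fin n → Bool) (𝓑 : Finset (Finset (Fin n)))
    (happrox : ∀ x : Fin n → Bool,
      |(∑ S : Finset (Fin n), c S * ∏ i ∈ S, bval (x i)) - bval (f x)| ≤ 1 / 3)
    {t : ℝ} (ht : t ∈ Set.Icc (0:ℝ) 1) :
    |(qpoly c x 𝓑).eval t - 1/2| ≤ 5/6 := by
  classical
  have ht0 : 0 ≤ t := ht.1
  have ht1 : 0 ≤ 1 - t := by linarith [ht.2]
  have hev : (qpoly c x 𝓑).eval t = ∑ W ∈ 𝓑.powerset,
      pval c (flipS x (W.biUnion id)) * (t ^ W.card * (1 - t) ^ (𝓑.card - W.card)) := by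
    simp only [qpoly, eval_finset_sum, eval_mul, eval_C, eval_pow, eval_X, eval_sub, eval_one]
  have hwsum : ∑ W ∈ 𝓑.powerset, (t ^ W.card * (1 - t) ^ (𝓑.card - W.card)) = 1 := by
    have h := Finset.prod_add (fun _ : Finset (Fin n) => t) (fun _ => 1 - t) 𝓑
    simp only [Finset.prod_const] at h
    calc ∑ W ∈ 𝓑.powerset, (t ^ W.card * (1 - t) ^ (𝓑.card - W.card))
        = ∑ W ∈ 𝓑.powerset, (t ^ W.card * (1 - t) ^ ((𝓑 \ W).card)) := by
          refine Finset.sum_congr rfl fun W hW => ?_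
          rw [Finset.card_sdiff_of_subset (Finset.mem_powerset.mp hW)]
      _ = (t + (1 - t)) ^ 𝓑.card := h.symm
      _ = 1 := by norm_num
  have hq : (qpoly c x 𝓑).eval t - 1/2 = ∑ W ∈ 𝓑.powerset,
      (pval c (flipS x (W.biUnion id)) - 1/2) * (t ^ W.card * (1 - t) ^ (𝓑.card - W.card)) := by
    have h2 : ∑ W ∈ 𝓑.powerset,
        (pval c (flipS x (W.biUnion id)) - 1/2) * (t ^ W.card * (1 - t) ^ (𝓑.card - W.card))
        = (∑ W ∈ 𝓑.powerset,
            pval c (flipS x (W.biUnion id)) * (t ^ W.card * (1 - t) ^ (𝓑.card - W.card)))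
          - (1/2) * ∑ W ∈ 𝓑.powerset, (t ^ W.card * (1 - t) ^ (𝓑.card - W.card)) := by
      rw [Finset.mul_sum, ← Finset.sum_sub_distrib]
      refine Finset.sum_congr rfl fun W _ => by ring
    rw [h2, hwsum, hev]
    ring
  rw [hq]
  calc |∑ W ∈ 𝓑.powerset,
      (pval c (flipS x (W.biUnion id)) - 1/2) * (t ^ W.card * (1 - t) ^ (𝓑.card - W.card))|
      ≤ ∑ W ∈ 𝓑.powerset,
        |(pval c (flipS x (W.biUnion id)) - 1/2) * (t ^ W.card * (1 - t) ^ (𝓑.card - W.card))| :=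
      Finset.abs_sum_le_sum_abs _ _
    _ ≤ ∑ W ∈ 𝓑.powerset, (5/6) * (t ^ W.card * (1 - t) ^ (𝓑.card - W.card)) := by
      refine Finset.sum_le_sum fun W _ => ?_
      rw [abs_mul]
      have hwt : 0 ≤ t ^ W.card * (1 - t) ^ (𝓑.card - W.card) :=
        mul_nonneg (pow_nonneg ht0 _) (pow_nonneg ht1 _)
      rw [abs_of_nonneg hwt]
      exact mul_le_mul_of_nonneg_right (pval_half c f happrox _) hwt
    _ = 5/6 := by rw [← Finset.mul_sum, hwsum, mul_one]

lemma qpoly_eval_zero (c : Finset (Fin n) → ℝ) (x : Fin n → Bool)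
    (𝓑 : Finset (Finset (Fin n))) : (qpoly c x 𝓑).eval 0 = pval c x := by
  classical
  simp only [qpoly, eval_finset_sum, eval_mul, eval_C, eval_pow, eval_X, eval_sub, eval_one]
  rw [Finset.sum_eq_single ∅]
  · simp [flipS_empty]
  · intro W _ hWne
    rw [zero_pow (fun h => hWne (Finset.card_eq_zero.mp h))]
    ring
  · intro h
    exact absurd (Finset.empty_mem_powerset 𝓑) h

lemma qpoly_deriv_zero (c : Finset (Fin n) → ℝ) (x : Fin n → Bool)
    (𝓑 : Finset (Finset (Fin n))) (hne : ∀ B ∈ 𝓑, B ≠ ∅) :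
    (derivative (qpoly c x 𝓑)).eval 0
      = (∑ B ∈ 𝓑, pval c (flipS x B)) - (𝓑.card : ℝ) * pval c x := by
  classical
  simp only [qpoly, derivative_sum, eval_finset_sum]
  set e : Finset (Finset (Fin n)) → ℝ := fun W =>
    (derivative (C (pval c (flipS x (W.biUnion id))) *
      (X ^ W.card * (1 - X) ^ (𝓑.card - W.card)))).eval 0 with he
  show ∑ W ∈ 𝓑.powerset, e W = _
  have hsub : insert ∅ (𝓑.image fun B => ({B} : Finset (Finset (Fin n)))) ⊆ 𝓑.powerset := by
    intro W hW
    rw [Finset.mem_insert] at hW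
    rcases hW with rfl | hW
    · exact Finset.empty_mem_powerset 𝓑
    · obtain ⟨B, hB, rfl⟩ := Finset.mem_image.mp hW
      exact Finset.mem_powerset.mpr (Finset.singleton_subset_iff.mpr hB)
  have hvanish : ∀ W ∈ 𝓑.powerset,
      W ∉ insert ∅ (𝓑.image fun B => ({B} : Finset (Finset (Fin n)))) → e W = 0 := by
    intro W hWp hWn
    rw [Finset.mem_insert, not_or] at hWn
    have h2 : 2 ≤ W.card := by
      rcases Nat.lt_or_ge W.card 2 with h | h
      · interval_cases h' : W.card
        · exact absurd (Finset.card_eq_zero.mp h') hWn.1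
        · obtain ⟨B, rfl⟩ := Finset.card_eq_one.mp h'
          exact absurd (Finset.mem_image.mpr ⟨B, by
            have := Finset.mem_powerset.mp hWp
            exact Finset.singleton_subset_iff.mp this, rfl⟩) hWn.2
      · exact h
    rw [he]
    exact eval0_deriv_term2 _ _ _ h2
  rw [← Finset.sum_subset hsub hvanish]
  have hnotmem : (∅ : Finset (Finset (Fin n))) ∉ 𝓑.image (fun B => ({B} : Finset (Finset (Fin n)))) := by
    rw [Finset.mem_image]
    rintro ⟨B, _, hB⟩
    exact (Finset.singleton_ne_empty B) hB
  rw [Finset.sum_insert hnotmem]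
  rw [Finset.sum_image (fun B1 _ B2 _ h => Finset.singleton_inj.mp h)]
  have hEmpty : e ∅ = -((𝓑.card : ℝ) * pval c x) := by
    rw [he]
    simp only [Finset.card_empty, Nat.sub_zero]
    rw [eval0_deriv_term0]
    rw [show (∅ : Finset (Finset (Fin n))).biUnion id = ∅ from rfl, flipS_empty]
    ring
  have hB : ∀ B ∈ 𝓑, e {B} = pval c (flipS x B) := by
    intro B _
    rw [he]
    simp only [Finset.card_singleton, Finset.singleton_biUnion, id]
    rw [eval0_deriv_term1]
  rw [hEmpty, Finset.sum_congr rfl hB]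
  ring

end Core2

open Polynomial Finset in
theorem stmt6' {n : ℕ} (f : (Fin n → Bool) → Bool) (d : ℕ)
    (c : Finset (Fin n) → ℝ)
    (hdeg : ∀ S : Finset (Fin n), c S ≠ 0 → S.card ≤ d)
    (happrox : ∀ x : Fin n → Bool,
      |(∑ S : Finset (Fin n), c S * ∏ i ∈ S, bval (x i)) - bval (f x)| ≤ 1 / 3) :
    (bs f : ℝ) ≤ 5 * (d : ℝ) ^ 2 := by
  classical
  obtain ⟨x, 𝓑, hcard, hflip, hdisj⟩ := bs_witness f
  rcases Nat.eq_zero_or_pos (bs f) with hb0 | hbpos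
  · rw [hb0]
    push_cast
    positivity
  have hpx : ∀ y : Fin n → Bool,
      (∑ S : Finset (Fin n), c S * ∏ i ∈ S, bval (y i)) = pval c y := fun y => rfl
  have hBne : ∀ B ∈ 𝓑, B ≠ ∅ := by
    intro B hB h
    have := hflip B hB
    rw [h, flipS_empty] at this
    exact this rfl
  obtain ⟨B0, hB0⟩ : 𝓑.Nonempty := Finset.card_pos.mp (by rw [hcard]; exact hbpos)
  have hd1 : 1 ≤ d := by
    by_contra hd
    have hd0 : d = 0 := by omega
    have hconst : ∀ y, pval c y = c ∅ := by
      intro y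
      rw [pval, Finset.sum_eq_single ∅]
      · simp
      · intro S _ hS
        have hc0 : c S = 0 := by
          by_contra h
          have := hdeg S h
          rw [hd0] at this
          exact hS (Finset.card_eq_zero.mp (Nat.le_zero.mp this))
        rw [hc0, zero_mul]
      · intro h; exact absurd (Finset.mem_univ ∅) h
    have h1 := happrox x
    have h2 := happrox (flipS x B0)
    rw [hpx, hconst] at h1 h2
    have hne := hflip B0 hB0
    rw [abs_le] at h1 h2
    cases hfx : f x
    · have hft : f (flipS x B0) = true := by
        cases hfb : f (flipS x B0)
        · exact absurd (hfb.trans hfx.symm) hne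
        · rfl
      rw [hfx] at h1; rw [hft] at h2
      simp only [bval_false', bval_true'] at h1 h2
      linarith
    · have hft : f (flipS x B0) = false := by
        cases hfb : f (flipS x B0)
        · rfl
        · exact absurd (hfb.trans hfx.symm) hne
      rw [hfx] at h1; rw [hft] at h2
      simp only [bval_false', bval_true'] at h1 h2
      linarith
  set q : ℝ[X] := qpoly c x 𝓑 with hqdef
  have hqdeg : q.natDegree ≤ d := qpoly_natDegree_le c x 𝓑 hdisj d hdeg
  have hqbound : ∀ t ∈ Set.Icc (0:ℝ) 1, |q.eval t - 1/2| ≤ 5/6 := fun t ht =>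
    qpoly_eval_bound c f x 𝓑 happrox ht
  have hq0 : q.eval 0 = pval c x := qpoly_eval_zero c x 𝓑
  have hqd : (derivative q).eval 0
      = (∑ B ∈ 𝓑, pval c (flipS x B)) - (𝓑.card : ℝ) * pval c x :=
    qpoly_deriv_zero c x 𝓑 hBne
  -- Markov step
  set r : ℝ[X] := q.comp (C (1/2 : ℝ) * (X + 1)) - C (1/2 : ℝ) with hr
  have hlin : (C (1/2 : ℝ) * (X + 1)).natDegree ≤ 1 := by
    refine le_trans (Polynomial.natDegree_C_mul_le _ _) ?_
    refine le_trans (Polynomial.natDegree_add_le _ _) ?_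
    simp
  have hrdeg : r.natDegree ≤ d := by
    rw [hr]
    refine le_trans (Polynomial.natDegree_sub_le _ _) (max_le ?_ (by simp))
    refine le_trans (Polynomial.natDegree_comp_le) ?_
    calc q.natDegree * (C (1/2 : ℝ) * (X + 1)).natDegree ≤ d * 1 :=
          Nat.mul_le_mul hqdeg hlin
      _ = d := mul_one d
  have hrbound : ∀ t ∈ Set.Icc (-1:ℝ) 1, |r.eval t| ≤ 5/6 := by
    intro t ht
    have hmem : (1/2) * (t + 1) ∈ Set.Icc (0:ℝ) 1 := by
      constructor
      · linarith [ht.1]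
      · linarith [ht.2]
    have : r.eval t = q.eval ((1/2) * (t + 1)) - 1/2 := by
      rw [hr]
      simp [eval_comp]
    rw [this]
    exact hqbound _ hmem
  have hrderiv : (derivative r).eval (-1) = (1/2) * (derivative q).eval 0 := by
    rw [hr, derivative_sub, derivative_C, sub_zero, derivative_comp]
    simp [eval_comp]
  set r2 : ℝ[X] := r.comp (-X) with hr2
  have hr2deg : r2.natDegree ≤ d := by
    rw [hr2]
    refine le_trans (Polynomial.natDegree_comp_le) ?_
    calc r.natDegree * (-X : ℝ[X]).natDegree ≤ d * 1 := by
          refine Nat.mul_le_mul hrdeg ?_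
          simp
      _ = d := mul_one d
  have hr2bound : ∀ t ∈ Set.Icc (-1:ℝ) 1, |r2.eval t| ≤ 5/6 := by
    intro t ht
    have : r2.eval t = r.eval (-t) := by rw [hr2]; simp [eval_comp]
    rw [this]
    exact hrbound (-t) ⟨by linarith [ht.2], by linarith [ht.1]⟩
  have hmar := markov_endpoint d hd1 (5/6) r2 hr2deg hr2bound
  have hr2d : (derivative r2).eval 1 = -((derivative r).eval (-1)) := by
    rw [hr2, derivative_comp]
    simp [eval_comp]
  rw [hr2d, abs_neg, hrderiv] at hmar
  have hqd_bound : |(derivative q).eval 0| ≤ 5/3 * (d:ℝ)^2 := by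
    rw [abs_mul] at hmar
    rw [abs_of_nonneg (by norm_num : (0:ℝ) ≤ 1/2)] at hmar
    nlinarith [abs_nonneg ((derivative q).eval 0)]
  -- lower bound for the derivative
  have hb : (𝓑.card : ℝ) / 3 ≤ |(derivative q).eval 0| := by
    have hax := happrox x
    rw [hpx] at hax
    cases hfx : f x
    · rw [hfx] at hax
      simp only [bval_false'] at hax
      rw [abs_le] at hax
      have hsum : (𝓑.card : ℝ) * (2/3) ≤ ∑ B ∈ 𝓑, pval c (flipS x B) := by
        have : ∀ B ∈ 𝓑, (2/3 : ℝ) ≤ pval c (flipS x B) := by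
          intro B hB
          have hfB := happrox (flipS x B)
          rw [hpx] at hfB
          have hft : f (flipS x B) = true := by
            cases hfb : f (flipS x B)
            · exact absurd (hfb.trans hfx.symm) (hflip B hB)
            · rfl
          rw [hft] at hfB
          simp only [bval_true'] at hfB
          rw [abs_le] at hfB
          linarith [hfB.1]
        calc (𝓑.card : ℝ) * (2/3) = ∑ _B ∈ 𝓑, (2/3 : ℝ) := by
              rw [Finset.sum_const, nsmul_eq_mul]
          _ ≤ _ := Finset.sum_le_sum this
      have : (𝓑.card : ℝ) / 3 ≤ (derivative q).eval 0 := by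
        rw [hqd]
        have h3 : (𝓑.card : ℝ) * pval c x ≤ (𝓑.card : ℝ) * (1/3) := by
          refine mul_le_mul_of_nonneg_left ?_ (Nat.cast_nonneg _)
          linarith [hax.2]
        linarith
      exact le_trans this (le_abs_self _)
    · rw [hfx] at hax
      simp only [bval_true'] at hax
      rw [abs_le] at hax
      have hsum : ∑ B ∈ 𝓑, pval c (flipS x B) ≤ (𝓑.card : ℝ) * (1/3) := by
        have : ∀ B ∈ 𝓑, pval c (flipS x B) ≤ (1/3 : ℝ) := by
          intro B hB
          have hfB := happrox (flipS x B)
          rw [hpx] at hfB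
          have hft : f (flipS x B) = false := by
            cases hfb : f (flipS x B)
            · rfl
            · exact absurd (hfb.trans hfx.symm) (hflip B hB)
          rw [hft] at hfB
          simp only [bval_false'] at hfB
          rw [abs_le] at hfB
          linarith [hfB.2]
        calc ∑ B ∈ 𝓑, pval c (flipS x B) ≤ ∑ _B ∈ 𝓑, (1/3 : ℝ) := Finset.sum_le_sum this
          _ = (𝓑.card : ℝ) * (1/3) := by rw [Finset.sum_const, nsmul_eq_mul]
      have : (𝓑.card : ℝ) / 3 ≤ -((derivative q).eval 0) := by
        rw [hqd]
        have h3 : (𝓑.card : ℝ) * (2/3) ≤ (𝓑.card : ℝ) * pval c x := by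
          refine mul_le_mul_of_nonneg_left ?_ (Nat.cast_nonneg _)
          linarith [hax.1]
        linarith
      exact le_trans this (neg_le_abs _)
  have hfin : ((bs f : ℕ) : ℝ) = (𝓑.card : ℝ) := by rw [hcard]
  rw [hfin]
  nlinarith [hb, hqd_bound]


/-- `bs(f) ≤ 5·(deg̃_{1/3}(f))²`: whenever a multilinear polynomial
(given by its coefficients `c`) of degree at most `d` approximates `f` to within
`1/3` pointwise on the cube, `bs(f) ≤ 5d²`. -/
theorem stmt6 {n : ℕ} (f : (Fin n → Bool) → Bool) (d : ℕ)
    (c : Finset (Fin n) → ℝ)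
    (hdeg : ∀ S : Finset (Fin n), c S ≠ 0 → S.card ≤ d)
    (happrox : ∀ x : Fin n → Bool,
      |(∑ S : Finset (Fin n), c S * ∏ i ∈ S, bval (x i)) - bval (f x)| ≤ 1 / 3) :
    (bs f : ℝ) ≤ 5 * (d : ℝ) ^ 2 :=
  stmt6' f d c hdeg happrox
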